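/- arXiv:2307.16011 — 6 statements merged into one kernel-verified Lean document; each statement's English description precedes it below -/
import Mathlib

section
/- Let a < b be reals and γ ≥ δ > 0. Then for every real x, the indicator 1_{[a,b]}(x) is bounded above by (1 + 2δ/γ)·(1/π)·∫_{a−γ}^{b+γ} Im(1/(x − λ − iδ)) dλ. -/
open intervalIntegral

lemma arctan_nonneg_aux {t : ℝ} (ht : 0 ≤ t) : 0 ≤ Real.arctan t := by
  have := Real.arctan_strictMono.monotone ht
  rwa [Real.arctan_zero] at this

lemma arctan_le_self_aux {t : ℝ} (ht : 0 ≤ t) : Real.arctan t ≤ t := by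
  have h1 : 0 ≤ Real.arctan t := arctan_nonneg_aux ht
  have h2 : Real.arctan t < Real.pi / 2 := Real.arctan_lt_pi_div_two t
  calc Real.arctan t ≤ Real.tan (Real.arctan t) := Real.le_tan h1 h2
    _ = t := Real.tan_arctan t

lemma arctan_ge_aux {t : ℝ} (ht : 0 < t) : Real.pi / 2 - t⁻¹ ≤ Real.arctan t := by
  have h := Real.arctan_inv_of_pos ht
  have h2 : Real.arctan t⁻¹ ≤ t⁻¹ := arctan_le_self_aux (by positivity)
  linarith

lemma integral_eval (x δ p q : ℝ) (hδ : 0 < δ) :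
    (∫ lam in p..q, (((x : ℂ) - lam - δ * Complex.I)⁻¹).im) =
      Real.arctan ((q - x) / δ) - Real.arctan ((p - x) / δ) := by
  have him : ∀ lam : ℝ, (((x : ℂ) - lam - δ * Complex.I)⁻¹).im
      = δ / ((lam - x) ^ 2 + δ ^ 2) := by
    intro lam
    rw [Complex.inv_im]
    have h1 : ((x : ℂ) - lam - δ * Complex.I).im = -δ := by simp
    have h2 : Complex.normSq ((x : ℂ) - lam - δ * Complex.I) = (lam - x) ^ 2 + δ ^ 2 := by
      rw [Complex.normSq_apply]
      simp
      ring
    rw [h1, h2]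
    ring
  have key : ∀ lam : ℝ, HasDerivAt (fun t : ℝ => Real.arctan ((t - x) / δ))
      (δ / ((lam - x) ^ 2 + δ ^ 2)) lam := by
    intro lam
    have h1 : HasDerivAt (fun t : ℝ => (t - x) / δ) (1 / δ) lam := by
      simpa using ((hasDerivAt_id lam).sub_const x).div_const δ
    have h2 := (Real.hasDerivAt_arctan ((lam - x) / δ)).comp lam h1
    refine HasDerivAt.congr_deriv h2 ?_
    field_simp
    ring
  have hint : IntervalIntegrable (fun lam => δ / ((lam - x) ^ 2 + δ ^ 2))
      MeasureTheory.volume p q := by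
    apply ContinuousOn.intervalIntegrable
    apply Continuous.continuousOn
    apply Continuous.div continuous_const (by continuity)
    intro t
    positivity
  rw [intervalIntegral.integral_congr (g := fun lam => δ / ((lam - x) ^ 2 + δ ^ 2))
    (fun lam _ => him lam)]
  exact intervalIntegral.integral_eq_sub_of_hasDerivAt (fun lam _ => key lam) hint

/-- For `a < b`, `γ ≥ δ > 0` and every real `x`,
`1_[a,b](x) ≤ (1 + 2δ/γ) (1/π) ∫_{a-γ}^{b+γ} Im (1/(x - λ - iδ)) dλ`. -/
theorem stmt4 (a b γ δ : ℝ) (hab : a < b) (hδ : 0 < δ) (hγδ : δ ≤ γ) (x : ℝ) :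
    Set.indicator (Set.Icc a b) (fun _ => (1 : ℝ)) x ≤
      (1 + 2 * δ / γ) * (1 / Real.pi) *
        ∫ lam in (a - γ)..(b + γ), (((x : ℂ) - lam - δ * Complex.I)⁻¹).im := by
  have hγ : 0 < γ := lt_of_lt_of_le hδ hγδ
  have hπ := Real.pi_gt_three
  rw [integral_eval x δ (a - γ) (b + γ) hδ]
  set I := Real.arctan ((b + γ - x) / δ) - Real.arctan ((a - γ - x) / δ) with hI
  have hc : 0 < (1 + 2 * δ / γ) * (1 / Real.pi) := by positivity
  by_cases hx : x ∈ Set.Icc a b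
  · rw [Set.indicator_of_mem hx]
    obtain ⟨hax, hxb⟩ := hx
    have hsplit : 2 * δ / γ = 2 * (δ / γ) := by ring
    have hγδ' : γ / δ ≤ (b + γ - x) / δ := by gcongr <;> linarith
    have ht1 : (0 : ℝ) < (b + γ - x) / δ := lt_of_lt_of_le (by positivity) hγδ'
    have h2 := arctan_ge_aux ht1
    have h3 : ((b + γ - x) / δ)⁻¹ ≤ δ / γ := by
      rw [inv_div]
      gcongr
      linarith
    have hu : Real.pi / 2 - δ / γ ≤ Real.arctan ((b + γ - x) / δ) := by linarith
    have heq : (a - γ - x) / δ = -((x + γ - a) / δ) := by ring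
    have hγδ2 : γ / δ ≤ (x + γ - a) / δ := by gcongr <;> linarith
    have ht2 : (0 : ℝ) < (x + γ - a) / δ := lt_of_lt_of_le (by positivity) hγδ2
    have h4 := arctan_ge_aux ht2
    have h5 : ((x + γ - a) / δ)⁻¹ ≤ δ / γ := by
      rw [inv_div]
      gcongr
      linarith
    have hl : Real.arctan ((a - γ - x) / δ) ≤ -(Real.pi / 2 - δ / γ) := by
      rw [heq, Real.arctan_neg]
      linarith
    have hIb : Real.pi - 2 * (δ / γ) ≤ I := by rw [hI]; linarith
    have hs0 : (0 : ℝ) < δ / γ := by positivity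
    have hs1 : δ / γ ≤ 1 := (div_le_one hγ).mpr hγδ
    have key : Real.pi ≤ (1 + 2 * δ / γ) * I := by
      nlinarith [mul_le_mul_of_nonneg_left hIb (show (0:ℝ) ≤ 1 + 2 * δ / γ by positivity),
        mul_nonneg hs0.le (show (0:ℝ) ≤ Real.pi - 1 - 2 * (δ / γ) by linarith)]
    have heq2 : (1 + 2 * δ / γ) * (1 / Real.pi) * I = ((1 + 2 * δ / γ) * I) / Real.pi := by
      ring
    rw [heq2, le_div_iff₀ (by linarith), one_mul]
    exact key
  · rw [Set.indicator_of_notMem hx]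
    have hmono : Real.arctan ((a - γ - x) / δ) ≤ Real.arctan ((b + γ - x) / δ) := by
      apply Real.arctan_strictMono.monotone
      gcongr
      linarith
    have hI0 : 0 ≤ I := by rw [hI]; linarith
    exact mul_nonneg hc.le hI0
end

section
/- Let X be an N×N real symmetric matrix, let a < b, γ ≥ δ > 0, and let P denote the orthogonal projection onto the span of eigenvectors of X with eigenvalues in [a,b]. Then in the positive semidefinite order, P ≤ (1 + 2δ/γ)·(1/π)·Im ∫_{a−γ}^{b+γ} (X − λ − iδ)^{-1} dλ, where Im M := (M − M*)/(2i). -/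
open Matrix intervalIntegral
open scoped ComplexOrder

/-- The orthogonal projection onto the span of the eigenvectors of a symmetric matrix `X`
with eigenvalues in `[a, b]`, given by the spectral theorem. -/
noncomputable def specProj {N : ℕ} (X : Matrix (Fin N) (Fin N) ℝ) (hX : X.IsHermitian)
    (a b : ℝ) : Matrix (Fin N) (Fin N) ℝ :=
  (hX.eigenvectorUnitary : Matrix (Fin N) (Fin N) ℝ) *
    Matrix.diagonal (fun i => if hX.eigenvalues i ∈ Set.Icc a b then (1 : ℝ) else 0) *
    star (hX.eigenvectorUnitary : Matrix (Fin N) (Fin N) ℝ)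

/-- The imaginary part `(M - Mᴴ)/(2i)` of a complex matrix. -/
noncomputable def matIm {N : ℕ} (M : Matrix (Fin N) (Fin N) ℂ) : Matrix (Fin N) (Fin N) ℂ :=
  (2 * Complex.I)⁻¹ • (M - Mᴴ)

/-- The (entrywise) integral of the resolvent `(X - λ - iδ)⁻¹` for `λ ∈ [s, t]`. -/
noncomputable def resolventInt {N : ℕ} (X : Matrix (Fin N) (Fin N) ℝ) (δ s t : ℝ) :
    Matrix (Fin N) (Fin N) ℂ :=
  Matrix.of fun i j => ∫ lam in s..t,
    ((X.map (fun r => (r : ℂ)) - ((lam : ℂ) + δ * Complex.I) • (1 : Matrix (Fin N) (Fin N) ℂ))⁻¹) i j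

/-! ### Auxiliary scalar lemmas -/

lemma arctanLeSelf {y : ℝ} (h : 0 ≤ y) : Real.arctan y ≤ y := by
  have h1 : Real.arctan y < Real.pi / 2 := Real.arctan_lt_pi_div_two y
  have h2 : 0 ≤ Real.arctan y := by
    rw [← Real.arctan_zero]
    exact Real.arctan_strictMono.monotone h
  have := Real.le_tan h2 h1
  rwa [Real.tan_arctan] at this

lemma arctanLB {x : ℝ} (hx : 1 ≤ x) : Real.pi / 2 - 1 / x ≤ Real.arctan x := by
  have hx0 : 0 < x := by linarith
  have h1 : Real.arctan x = Real.pi / 2 - Real.arctan x⁻¹ := by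
    rw [Real.arctan_inv_of_pos hx0]; ring
  rw [h1, one_div]
  have : Real.arctan x⁻¹ ≤ x⁻¹ := arctanLeSelf (by positivity)
  linarith

lemma scalarIneq (a b γ δ E : ℝ) (hab : a < b) (hδ : 0 < δ) (hγδ : δ ≤ γ) :
    (if E ∈ Set.Icc a b then (1:ℝ) else 0) ≤
      (1 + 2*δ/γ) * (1/Real.pi) * (Real.arctan ((b+γ-E)/δ) - Real.arctan ((a-γ-E)/δ)) := by
  have hγ : 0 < γ := lt_of_lt_of_le hδ hγδ
  have hπ : (3:ℝ) < Real.pi := Real.pi_gt_three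
  split_ifs with h
  · obtain ⟨haE, hEb⟩ := h
    set u := (b+γ-E)/δ with hu
    set v := (E-(a-γ))/δ with hv
    have hneg : (a-γ-E)/δ = -v := by rw [hv]; ring
    rw [hneg, Real.arctan_neg, sub_neg_eq_add]
    have huγ : γ/δ ≤ u := by rw [hu]; gcongr <;> linarith
    have hvγ : γ/δ ≤ v := by rw [hv]; gcongr <;> linarith
    have h1γ : 1 ≤ γ/δ := (one_le_div hδ).mpr hγδ
    have hu1 : 1 ≤ u := le_trans h1γ huγ
    have hv1 : 1 ≤ v := le_trans h1γ hvγ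
    have hau := arctanLB hu1
    have hav := arctanLB hv1
    have hiu : 1/u ≤ δ/γ := by
      rw [div_le_div_iff₀ (by linarith) hγ]
      calc 1 * γ = γ/δ * δ := by field_simp
      _ ≤ u * δ := by apply mul_le_mul_of_nonneg_right huγ (le_of_lt hδ)
      _ = δ * u := by ring
    have hiv : 1/v ≤ δ/γ := by
      rw [div_le_div_iff₀ (by linarith) hγ]
      calc 1 * γ = γ/δ * δ := by field_simp
      _ ≤ v * δ := by apply mul_le_mul_of_nonneg_right hvγ (le_of_lt hδ)
      _ = δ * v := by ring
    set t := δ/γ with ht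
    have ht1 : 0 < t := by positivity
    have ht2 : t ≤ 1 := (div_le_one hγ).mpr hγδ
    have hS : Real.pi - 2*t ≤ Real.arctan u + Real.arctan v := by linarith
    have h2t : 2*δ/γ = 2*t := by rw [ht]; ring
    rw [h2t]
    have hkey : Real.pi ≤ (1+2*t) * (Real.arctan u + Real.arctan v) := by
      nlinarith [mul_le_mul_of_nonneg_left hS (show (0:ℝ) ≤ 1+2*t by linarith)]
    have : (1 + 2*t) * (1/Real.pi) * (Real.arctan u + Real.arctan v)
        = ((1+2*t) * (Real.arctan u + Real.arctan v))/Real.pi := by ring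
    rw [this, le_div_iff₀ (by linarith : (0:ℝ) < Real.pi), one_mul]
    exact hkey
  · apply mul_nonneg (mul_nonneg (by positivity) (by positivity))
    rw [sub_nonneg]
    apply Real.arctan_strictMono.monotone
    gcongr <;> linarith

lemma resCont (E δ : ℝ) (hδ : 0 < δ) :
    Continuous (fun lam : ℝ => ((E : ℂ) - ((lam : ℂ) + δ * Complex.I))⁻¹) := by
  apply Continuous.inv₀
  · continuity
  · intro lam
    intro h
    have : ((E : ℂ) - ((lam : ℂ) + δ * Complex.I)).im = -δ := by simp
    rw [h] at this
    simp at this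
    linarith

lemma scalarInt (E δ s t : ℝ) (hδ : 0 < δ) :
    (∫ lam in s..t, ((E : ℂ) - ((lam : ℂ) + δ * Complex.I))⁻¹).im
      = Real.arctan ((t - E)/δ) - Real.arctan ((s - E)/δ) := by
  have hcont := resCont E δ hδ
  have hint : ∀ s t : ℝ, IntervalIntegrable (fun lam : ℝ => ((E : ℂ) - ((lam : ℂ) + δ * Complex.I))⁻¹) MeasureTheory.volume s t :=
    fun s t => hcont.intervalIntegrable s t
  have h1 : (∫ lam in s..t, ((E : ℂ) - ((lam : ℂ) + δ * Complex.I))⁻¹).im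
      = ∫ lam in s..t, (((E : ℂ) - ((lam : ℂ) + δ * Complex.I))⁻¹).im := by
    have := Complex.imCLM.intervalIntegral_comp_comm (hint s t)
    simpa [Complex.imCLM_apply] using this.symm
  rw [h1]
  have h2 : ∀ lam : ℝ, (((E : ℂ) - ((lam : ℂ) + δ * Complex.I))⁻¹).im
      = δ / ((E - lam)^2 + δ^2) := by
    intro lam
    rw [Complex.inv_im]
    have hre : ((E : ℂ) - ((lam : ℂ) + δ * Complex.I)).re = E - lam := by simp
    have him : ((E : ℂ) - ((lam : ℂ) + δ * Complex.I)).im = -δ := by simp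
    rw [Complex.normSq_apply, hre, him]
    ring
  simp_rw [h2]
  have hderiv : ∀ lam ∈ Set.uIcc s t, HasDerivAt (fun x => Real.arctan ((x - E)/δ))
      (δ / ((E - lam)^2 + δ^2)) lam := by
    intro lam _
    have h3 : HasDerivAt (fun x : ℝ => (x - E)/δ) (1/δ) lam := by
      simpa using ((hasDerivAt_id lam).sub_const E).div_const δ
    have := (Real.hasDerivAt_arctan ((lam - E)/δ)).comp lam h3
    refine this.congr_deriv ?_
    have hδ' : δ ≠ 0 := ne_of_gt hδ
    field_simp
    ring
  rw [intervalIntegral.integral_eq_sub_of_hasDerivAt hderiv]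
  · have hc : Continuous fun lam : ℝ => δ / ((E - lam)^2 + δ^2) := by
      apply Continuous.div continuous_const
      · continuity
      · intro x; positivity
    exact hc.intervalIntegrable s t

/-! ### Diagonalization machinery -/

section Diag
variable {N : ℕ} (X : Matrix (Fin N) (Fin N) ℝ) (hX : X.IsHermitian)

/-- The complexified eigenvector unitary. -/
noncomputable def Uc (hX : X.IsHermitian) : Matrix (Fin N) (Fin N) ℂ :=
  ((hX.eigenvectorUnitary : Matrix (Fin N) (Fin N) ℝ)).map Complex.ofReal

lemma mapStar (M : Matrix (Fin N) (Fin N) ℝ) :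
    (star M).map Complex.ofReal = (M.map Complex.ofReal)ᴴ := by
  ext i j
  simp [Matrix.map_apply, Matrix.conjTranspose_apply, Matrix.star_eq_conjTranspose]

lemma mapMul (M P : Matrix (Fin N) (Fin N) ℝ) :
    (M * P).map Complex.ofReal = M.map Complex.ofReal * P.map Complex.ofReal := by
  ext i j
  simp [Matrix.mul_apply, Matrix.map_apply]

lemma mapOne : (1 : Matrix (Fin N) (Fin N) ℝ).map Complex.ofReal = 1 := by
  ext i j
  by_cases hij : i = j <;> simp [Matrix.one_apply, hij]

lemma Uc_mul_star : Uc X hX * (Uc X hX)ᴴ = 1 := by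
  have h := (Matrix.mem_unitaryGroup_iff).mp hX.eigenvectorUnitary.2
  have h2 := congrArg (fun M : Matrix (Fin N) (Fin N) ℝ => M.map Complex.ofReal) h
  simp only [mapMul, mapStar, mapOne] at h2
  exact h2

lemma star_mul_Uc : (Uc X hX)ᴴ * Uc X hX = 1 := by
  have h := (Matrix.mem_unitaryGroup_iff').mp hX.eigenvectorUnitary.2
  have h2 := congrArg (fun M : Matrix (Fin N) (Fin N) ℝ => M.map Complex.ofReal) h
  simp only [mapMul, mapStar, mapOne] at h2
  exact h2

lemma Xc_eq : X.map (fun r => (r : ℂ)) =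
    Uc X hX * Matrix.diagonal (fun k => (hX.eigenvalues k : ℂ)) * (Uc X hX)ᴴ := by
  have h := hX.spectral_theorem
  rw [Unitary.conjStarAlgAut_apply] at h
  have h2 := congrArg (fun M : Matrix (Fin N) (Fin N) ℝ => M.map Complex.ofReal) h
  simp only [mapMul, mapStar] at h2
  have h3 : (Matrix.diagonal (RCLike.ofReal ∘ hX.eigenvalues)).map Complex.ofReal
      = Matrix.diagonal (fun k => (hX.eigenvalues k : ℂ)) := by
    ext i j
    by_cases hij : i = j <;> simp [Matrix.diagonal_apply, hij, Matrix.map_apply]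
  rw [h3] at h2
  exact h2

lemma resolvent_eq (lam : ℝ) (δ : ℝ) (hδ : 0 < δ) :
    (X.map (fun r => (r : ℂ)) - ((lam : ℂ) + δ * Complex.I) • (1 : Matrix (Fin N) (Fin N) ℂ))⁻¹
    = Uc X hX * Matrix.diagonal
        (fun k => ((hX.eigenvalues k : ℂ) - ((lam : ℂ) + δ * Complex.I))⁻¹) * (Uc X hX)ᴴ := by
  set z : ℂ := (lam : ℂ) + δ * Complex.I with hz
  have hz' : ∀ k, (hX.eigenvalues k : ℂ) - z ≠ 0 := by
    intro k h
    have : ((hX.eigenvalues k : ℂ) - z).im = -δ := by simp [hz]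
    rw [h] at this
    simp at this; linarith
  have key : X.map (fun r => (r : ℂ)) - z • 1
      = Uc X hX * Matrix.diagonal (fun k => (hX.eigenvalues k : ℂ) - z) * (Uc X hX)ᴴ := by
    rw [Xc_eq X hX]
    have h1 : z • (1 : Matrix (Fin N) (Fin N) ℂ)
        = Uc X hX * (z • (1 : Matrix (Fin N) (Fin N) ℂ)) * (Uc X hX)ᴴ := by
      rw [Matrix.mul_smul, mul_one, Matrix.smul_mul, Uc_mul_star]
    rw [h1, ← Matrix.sub_mul, ← Matrix.mul_sub]
    congr 2
    rw [Matrix.smul_one_eq_diagonal, Matrix.diagonal_sub]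
  rw [key]
  apply Matrix.inv_eq_right_inv
  have hDD : (fun k => ((hX.eigenvalues k : ℂ) - z) * ((hX.eigenvalues k : ℂ) - z)⁻¹)
      = fun _ => (1:ℂ) := by
    funext k; exact mul_inv_cancel₀ (hz' k)
  simp only [← Matrix.mul_assoc]
  rw [Matrix.mul_assoc (Uc X hX * Matrix.diagonal _) ((Uc X hX)ᴴ) (Uc X hX), star_mul_Uc,
    mul_one, Matrix.mul_assoc (Uc X hX), Matrix.diagonal_mul_diagonal, hDD,
    Matrix.diagonal_one, mul_one, Uc_mul_star]

lemma resolventInt_eq (δ s t : ℝ) (hδ : 0 < δ) :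
    resolventInt X δ s t = Uc X hX * Matrix.diagonal
      (fun k => ∫ lam in s..t, ((hX.eigenvalues k : ℂ) - ((lam : ℂ) + δ * Complex.I))⁻¹)
      * (Uc X hX)ᴴ := by
  ext i j
  show (∫ lam in s..t,
    ((X.map (fun r => (r : ℂ)) - ((lam : ℂ) + δ * Complex.I) • (1 : Matrix (Fin N) (Fin N) ℂ))⁻¹) i j) = _
  have h1 : ∀ lam : ℝ,
      ((X.map (fun r => (r : ℂ)) - ((lam : ℂ) + δ * Complex.I) • (1 : Matrix (Fin N) (Fin N) ℂ))⁻¹) i j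
      = ∑ k, Uc X hX i k * ((hX.eigenvalues k : ℂ) - ((lam : ℂ) + δ * Complex.I))⁻¹ * (Uc X hX)ᴴ k j := by
    intro lam
    rw [resolvent_eq X hX lam δ hδ, Matrix.mul_apply]
    congr 1; funext k
    rw [Matrix.mul_diagonal]
  simp_rw [h1]
  have hcont : ∀ k : Fin N, Continuous (fun lam : ℝ =>
      Uc X hX i k * ((hX.eigenvalues k : ℂ) - ((lam : ℂ) + δ * Complex.I))⁻¹ * (Uc X hX)ᴴ k j) := by
    intro k
    apply Continuous.mul _ continuous_const
    apply Continuous.mul continuous_const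
    apply Continuous.inv₀
    · continuity
    · intro lam h
      have : ((hX.eigenvalues k : ℂ) - ((lam : ℂ) + δ * Complex.I)).im = -δ := by simp
      rw [h] at this; simp at this; linarith
  rw [intervalIntegral.integral_finset_sum (fun k _ => (hcont k).intervalIntegrable s t)]
  rw [Matrix.mul_apply]
  congr 1; funext k
  rw [Matrix.mul_diagonal]
  have : (fun lam : ℝ => Uc X hX i k * ((hX.eigenvalues k : ℂ) - ((lam : ℂ) + δ * Complex.I))⁻¹ * (Uc X hX)ᴴ k j)
      = fun lam : ℝ => (Uc X hX i k * (Uc X hX)ᴴ k j) * ((hX.eigenvalues k : ℂ) - ((lam : ℂ) + δ * Complex.I))⁻¹ := by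
    funext lam; ring
  rw [this, intervalIntegral.integral_const_mul]
  ring

lemma matIm_conj (g : Fin N → ℂ) :
    matIm (Uc X hX * Matrix.diagonal g * (Uc X hX)ᴴ)
      = Uc X hX * Matrix.diagonal (fun k => ((g k).im : ℂ)) * (Uc X hX)ᴴ := by
  unfold matIm
  rw [Matrix.conjTranspose_mul, Matrix.conjTranspose_mul, Matrix.conjTranspose_conjTranspose,
    Matrix.diagonal_conjTranspose, ← Matrix.mul_assoc]
  have h1 : Uc X hX * Matrix.diagonal g * (Uc X hX)ᴴ - Uc X hX * Matrix.diagonal (star g) * (Uc X hX)ᴴ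
      = Uc X hX * Matrix.diagonal (fun k => g k - star (g k)) * (Uc X hX)ᴴ := by
    rw [← Matrix.sub_mul, ← Matrix.mul_sub]
    congr 2
    rw [Matrix.diagonal_sub]
    rfl
  have h3 : ((2 * Complex.I)⁻¹ • fun k => g k - star (g k)) = fun k => ((g k).im : ℂ) := by
    funext k
    show (2 * Complex.I)⁻¹ • (g k - star (g k)) = ((g k).im : ℂ)
    rw [smul_eq_mul, show (star (g k)) = (starRingEnd ℂ) (g k) from rfl, Complex.sub_conj]
    have h2 : (2 : ℂ) * Complex.I ≠ 0 := by
      simp [Complex.I_ne_zero]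
    field_simp
    push_cast
    ring
  rw [h1, ← Matrix.smul_mul, ← Matrix.mul_smul, ← Matrix.diagonal_smul, h3]

lemma specProj_map (a b : ℝ) :
    (specProj X hX a b).map (fun r => (r : ℂ))
      = Uc X hX * Matrix.diagonal
          (fun k => if hX.eigenvalues k ∈ Set.Icc a b then (1 : ℂ) else 0) * (Uc X hX)ᴴ := by
  show (specProj X hX a b).map Complex.ofReal = _
  unfold specProj
  rw [mapMul, mapMul, mapStar]
  congr 1
  congr 1
  ext i j
  rcases eq_or_ne i j with hij|hij
  · subst hij
    simp only [Matrix.map_apply, Matrix.diagonal_apply_eq]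
    split_ifs <;> simp
  · simp [Matrix.diagonal_apply_ne _ hij, Matrix.map_apply]

lemma smul_sub_conj (c : ℝ) (d e : Fin N → ℂ) :
    c • (Uc X hX * Matrix.diagonal d * (Uc X hX)ᴴ) - Uc X hX * Matrix.diagonal e * (Uc X hX)ᴴ
      = Uc X hX * Matrix.diagonal (fun k => c • d k - e k) * (Uc X hX)ᴴ := by
  have h : Matrix.diagonal (fun k => c • d k - e k)
      = c • Matrix.diagonal d - Matrix.diagonal e := by
    rw [← Matrix.diagonal_smul, ← Matrix.diagonal_sub]
    rfl
  rw [h, Matrix.mul_sub, Matrix.sub_mul, Matrix.mul_smul, Matrix.smul_mul]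

end Diag

/-- `P ≤ (1 + 2δ/γ) (1/π) Im ∫_{a-γ}^{b+γ} (X - λ - iδ)⁻¹ dλ`
in the positive semidefinite order. -/
theorem stmt7 {N : ℕ} (X : Matrix (Fin N) (Fin N) ℝ) (hX : X.IsHermitian)
    (a b γ δ : ℝ) (hab : a < b) (hδ : 0 < δ) (hγδ : δ ≤ γ) :
    (((1 + 2 * δ / γ) * (1 / Real.pi)) • matIm (resolventInt X δ (a - γ) (b + γ)) -
      (specProj X hX a b).map (fun r => (r : ℂ))).PosSemidef := by
  rw [resolventInt_eq X hX δ (a - γ) (b + γ) hδ, matIm_conj, specProj_map, smul_sub_conj]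
  apply Matrix.PosSemidef.mul_mul_conjTranspose_same
  rw [Matrix.posSemidef_diagonal_iff]
  intro k
  have him := scalarInt (hX.eigenvalues k) δ (a - γ) (b + γ) hδ
  have hentry : ((1 + 2 * δ / γ) * (1 / Real.pi)) •
        (((∫ lam in (a - γ)..(b + γ),
          ((hX.eigenvalues k : ℂ) - ((lam : ℂ) + δ * Complex.I))⁻¹).im : ℂ))
        - (if hX.eigenvalues k ∈ Set.Icc a b then (1 : ℂ) else 0)
      = (((1 + 2 * δ / γ) * (1 / Real.pi) *
          (Real.arctan ((b + γ - hX.eigenvalues k)/δ) - Real.arctan ((a - γ - hX.eigenvalues k)/δ))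
          - (if hX.eigenvalues k ∈ Set.Icc a b then (1 : ℝ) else 0) : ℝ) : ℂ) := by
    rw [him, Complex.real_smul]
    push_cast [apply_ite (Complex.ofReal)]
    ring
  show (0 : ℂ) ≤ _
  rw [hentry]
  rw [Complex.zero_le_real, sub_nonneg]
  exact scalarIneq a b γ δ (hX.eigenvalues k) hab hδ hγδ
end

section
/- Let X be an N×N real symmetric matrix, a < b, γ ≥ δ > 0, and P the orthogonal projection onto the span of eigenvectors of X with eigenvalues in [a,b]. Then (1/π)·Im ∫_{a+γ}^{b−γ} (X − λ − iδ)^{-1} dλ ≤ P + (δ/(πγ))·Id in the positive semidefinite order. -/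
open Matrix intervalIntegral
open scoped ComplexOrder

/- ## Auxiliary scalar lemmas -/

lemma aux_resDecomp (c δ lam : ℝ) (hδ : 0 < δ) :
    ((c : ℂ) - ((lam : ℂ) + δ * Complex.I))⁻¹ =
      (((c - lam)/((c - lam)^2 + δ^2) : ℝ) : ℂ) +
      (((δ/((c - lam)^2 + δ^2)) : ℝ) : ℂ) * Complex.I := by
  have hn : ((c - lam)^2 + δ^2) ≠ 0 := by positivity
  have hnc : ((c : ℂ) - (lam : ℂ))^2 + (δ : ℂ)^2 ≠ 0 := by
    intro h; apply hn; exact_mod_cast h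
  rw [inv_eq_of_mul_eq_one_right]
  push_cast
  field_simp
  ring_nf
  simp only [Complex.I_sq]
  ring

lemma aux_integral_h (c δ : ℝ) (hδ : 0 < δ) (s t : ℝ) :
    ∫ lam in s..t, δ/((c - lam)^2 + δ^2) =
      Real.arctan ((t - c)/δ) - Real.arctan ((s - c)/δ) := by
  have hd : ∀ lam : ℝ, HasDerivAt (fun x => Real.arctan ((x - c)/δ))
      (δ/((c - lam)^2 + δ^2)) lam := by
    intro lam
    have h1 : HasDerivAt (fun x : ℝ => (x - c)/δ) (1/δ) lam := by
      simpa using ((hasDerivAt_id lam).sub_const c).div_const δ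
    have h2 := (Real.hasDerivAt_arctan ((lam - c)/δ)).comp lam h1
    refine h2.congr_deriv ?_
    have hδ' : δ ≠ 0 := hδ.ne'
    field_simp
    ring
  have hcont : Continuous fun lam : ℝ => δ/((c - lam)^2 + δ^2) := by
    apply continuous_const.div (by continuity)
    intro x; positivity
  rw [intervalIntegral.integral_eq_sub_of_hasDerivAt (fun x _ => hd x)
    (hcont.intervalIntegrable s t)]

lemma aux_integral_res (c δ : ℝ) (hδ : 0 < δ) (s t : ℝ) :
    (2 * Complex.I)⁻¹ * ((∫ lam in s..t, ((c : ℂ) - ((lam:ℂ) + δ * Complex.I))⁻¹) -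
        (starRingEnd ℂ) (∫ lam in s..t, ((c : ℂ) - ((lam:ℂ) + δ * Complex.I))⁻¹)) =
      ((Real.arctan ((t - c)/δ) - Real.arctan ((s - c)/δ) : ℝ) : ℂ) := by
  have hg : Continuous fun lam : ℝ => (c - lam)/((c - lam)^2 + δ^2) := by
    apply Continuous.div (by continuity) (by continuity)
    intro x; positivity
  have hh : Continuous fun lam : ℝ => δ/((c - lam)^2 + δ^2) := by
    apply continuous_const.div (by continuity)
    intro x; positivity
  have hw : (∫ lam in s..t, ((c : ℂ) - ((lam:ℂ) + δ * Complex.I))⁻¹) =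
      ((∫ lam in s..t, (c - lam)/((c - lam)^2 + δ^2) : ℝ) : ℂ) +
      ((∫ lam in s..t, δ/((c - lam)^2 + δ^2) : ℝ) : ℂ) * Complex.I := by
    rw [show (fun lam : ℝ => ((c : ℂ) - ((lam:ℂ) + δ * Complex.I))⁻¹) =
        fun lam : ℝ => (((c - lam)/((c - lam)^2 + δ^2) : ℝ) : ℂ) +
          (((δ/((c - lam)^2 + δ^2)) : ℝ) : ℂ) * Complex.I
      from funext fun lam => aux_resDecomp c δ lam hδ]
    rw [intervalIntegral.integral_add, intervalIntegral.integral_mul_const,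
      integral_ofReal, integral_ofReal]
    · exact ((Complex.continuous_ofReal.comp hg).intervalIntegrable s t)
    · exact (((Complex.continuous_ofReal.comp hh).mul continuous_const).intervalIntegrable s t)
  rw [hw, aux_integral_h c δ hδ s t]
  set A := (∫ lam in s..t, (c - lam)/((c - lam)^2 + δ^2) : ℝ)
  set B := Real.arctan ((t - c)/δ) - Real.arctan ((s - c)/δ)
  simp only [_root_.map_add, _root_.map_mul, Complex.conj_ofReal, Complex.conj_I]
  have hI : Complex.I ≠ 0 := Complex.I_ne_zero
  field_simp
  ring

lemma aux_trip_apply {N : ℕ} (V W : Matrix (Fin N) (Fin N) ℂ) (f : Fin N → ℂ) (i j : Fin N) :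
    (V * Matrix.diagonal f * W) i j = ∑ k, V i k * (f k * W k j) := by
  rw [Matrix.mul_apply]
  refine Finset.sum_congr rfl fun k _ => ?_
  rw [Matrix.mul_diagonal]
  ring

lemma aux_smul_trip {N : ℕ} (V W : Matrix (Fin N) (Fin N) ℂ) (r : ℂ) (f : Fin N → ℂ) :
    r • (V * Matrix.diagonal f * W) = V * Matrix.diagonal (fun k => r * f k) * W := by
  ext i j
  rw [Matrix.smul_apply, aux_trip_apply, aux_trip_apply, Finset.smul_sum]
  refine Finset.sum_congr rfl fun k _ => ?_
  simp only [smul_eq_mul]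
  ring

lemma aux_add_trip {N : ℕ} (V W : Matrix (Fin N) (Fin N) ℂ) (f g : Fin N → ℂ) :
    V * Matrix.diagonal f * W + V * Matrix.diagonal g * W
      = V * Matrix.diagonal (fun k => f k + g k) * W := by
  ext i j
  rw [Matrix.add_apply, aux_trip_apply, aux_trip_apply, aux_trip_apply,
    ← Finset.sum_add_distrib]
  refine Finset.sum_congr rfl fun k _ => ?_
  ring

lemma aux_sub_trip {N : ℕ} (V W : Matrix (Fin N) (Fin N) ℂ) (f g : Fin N → ℂ) :
    V * Matrix.diagonal f * W - V * Matrix.diagonal g * W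
      = V * Matrix.diagonal (fun k => f k - g k) * W := by
  ext i j
  rw [Matrix.sub_apply, aux_trip_apply, aux_trip_apply, aux_trip_apply,
    ← Finset.sum_sub_distrib]
  refine Finset.sum_congr rfl fun k _ => ?_
  ring

lemma aux_real_smul {N : ℕ} (r : ℝ) (M : Matrix (Fin N) (Fin N) ℂ) :
    r • M = ((r : ℂ)) • M := by
  ext i j
  simp [Matrix.smul_apply, Complex.real_smul]

lemma aux_trip_congr {N : ℕ} (V W : Matrix (Fin N) (Fin N) ℂ) (f g : Fin N → ℂ)
    (h : ∀ k, f k = g k) :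
    V * Matrix.diagonal f * W = V * Matrix.diagonal g * W := by
  rw [show f = g from funext h]

lemma aux_key_ineq (a b γ δ c : ℝ) (hδ : 0 < δ) (hγδ : δ ≤ γ) :
    Real.arctan ((b - γ - c)/δ) - Real.arctan ((a + γ - c)/δ) ≤
      Real.pi * (if c ∈ Set.Icc a b then (1:ℝ) else 0) + δ/γ := by
  have hγ : 0 < γ := lt_of_lt_of_le hδ hγδ
  have hδγ : 0 < δ/γ := by positivity
  by_cases hc : c ∈ Set.Icc a b
  · rw [if_pos hc, mul_one]
    have h1 := Real.arctan_lt_pi_div_two ((b - γ - c)/δ)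
    have h2 := Real.neg_pi_div_two_lt_arctan ((a + γ - c)/δ)
    linarith
  · rw [if_neg hc, mul_zero, zero_add]
    have harc : Real.arctan (δ/γ) ≤ δ/γ := by
      have h0 : 0 ≤ Real.arctan (δ/γ) := by
        rw [← Real.arctan_zero]
        exact Real.arctan_strictMono.monotone hδγ.le
      have := Real.le_tan h0 (Real.arctan_lt_pi_div_two _)
      rwa [Real.tan_arctan] at this
    have hπ2 : Real.pi/2 - Real.arctan (γ/δ) = Real.arctan (δ/γ) := by
      rw [show δ/γ = (γ/δ)⁻¹ by rw [inv_div], Real.arctan_inv_of_pos (by positivity)]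
    simp only [Set.mem_Icc, not_and_or, not_le] at hc
    rcases hc with hc | hc
    · have hm : Real.arctan (γ/δ) ≤ Real.arctan ((a + γ - c)/δ) := by
        apply Real.arctan_strictMono.monotone
        gcongr
        linarith
      have h1 := Real.arctan_lt_pi_div_two ((b - γ - c)/δ)
      linarith
    · have hm : Real.arctan ((b - γ - c)/δ) ≤ Real.arctan (-(γ/δ)) := by
        apply Real.arctan_strictMono.monotone
        rw [← neg_div]
        gcongr
        linarith
      rw [Real.arctan_neg] at hm
      have h2 := Real.neg_pi_div_two_lt_arctan ((a + γ - c)/δ)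
      linarith

/-- `(1/π) Im ∫_{a+γ}^{b-γ} (X - λ - iδ)⁻¹ dλ ≤ P + (δ/(πγ)) Id`
in the positive semidefinite order. -/
theorem stmt8 {N : ℕ} (X : Matrix (Fin N) (Fin N) ℝ) (hX : X.IsHermitian)
    (a b γ δ : ℝ) (hab : a < b) (hδ : 0 < δ) (hγδ : δ ≤ γ) :
    ((specProj X hX a b).map (fun r => (r : ℂ)) +
        (δ / (Real.pi * γ)) • (1 : Matrix (Fin N) (Fin N) ℂ) -
      (1 / Real.pi) • matIm (resolventInt X δ (a + γ) (b - γ))).PosSemidef := by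
  classical
  have hπ : (0:ℝ) < Real.pi := Real.pi_pos
  have hγ : 0 < γ := lt_of_lt_of_le hδ hγδ
  set μ : Fin N → ℝ := hX.eigenvalues with hμdef
  set U : Matrix (Fin N) (Fin N) ℝ := (hX.eigenvectorUnitary : Matrix (Fin N) (Fin N) ℝ)
    with hUdef
  set V : Matrix (Fin N) (Fin N) ℂ := U.map Complex.ofReal with hVdef
  have hstar : star V = (star U).map Complex.ofReal := by
    ext i j
    simp [hVdef, Matrix.star_eq_conjTranspose, Matrix.conjTranspose_apply, Matrix.map_apply,
      Complex.conj_ofReal]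
  have hmapmul : ∀ (P Q : Matrix (Fin N) (Fin N) ℝ),
      (P * Q).map Complex.ofReal = P.map Complex.ofReal * Q.map Complex.ofReal := by
    intro P Q
    exact Matrix.map_mul (f := Complex.ofRealHom)
  have hUU : U * star U = 1 := (Matrix.mem_unitaryGroup_iff).mp hX.eigenvectorUnitary.2
  have hUU' : star U * U = 1 := (Matrix.mem_unitaryGroup_iff').mp hX.eigenvectorUnitary.2
  have hVV : V * star V = 1 := by
    rw [hstar, hVdef, ← hmapmul, hUU, Matrix.map_one _ Complex.ofReal_zero Complex.ofReal_one]
  have hVV' : star V * V = 1 := by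
    rw [hstar, hVdef, ← hmapmul, hUU', Matrix.map_one _ Complex.ofReal_zero Complex.ofReal_one]
  -- the spectral theorem, over ℂ
  have hXc : X.map (fun r => (r : ℂ)) = V * Matrix.diagonal (fun k => (μ k : ℂ)) * star V := by
    have hdiag : (Matrix.diagonal (RCLike.ofReal ∘ μ)).map Complex.ofReal
        = Matrix.diagonal (fun k => (μ k : ℂ)) := by
      ext i j
      by_cases h : i = j <;>
        simp [Matrix.map_apply, Matrix.diagonal_apply, h]
    conv_lhs => rw [hX.spectral_theorem]
    show ((U * Matrix.diagonal (RCLike.ofReal ∘ μ) * star U).map Complex.ofReal) = _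
    rw [hmapmul, hmapmul, hstar, hdiag, ← hVdef]
  -- resolvent formula
  have hres : ∀ lam : ℝ,
      (X.map (fun r => (r : ℂ)) - ((lam : ℂ) + δ * Complex.I) • (1 : Matrix (Fin N) (Fin N) ℂ))⁻¹
        = V * Matrix.diagonal (fun k => ((μ k : ℂ) - ((lam:ℂ) + δ * Complex.I))⁻¹) * star V := by
    intro lam
    set z : ℂ := (lam:ℂ) + δ * Complex.I with hz
    have hzk : ∀ k, (μ k : ℂ) - z ≠ 0 := by
      intro k h
      have him := congrArg Complex.im h
      simp [hz] at him
      exact hδ.ne' him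
    have hdiagz : Matrix.diagonal (fun _ : Fin N => z) = z • (1 : Matrix (Fin N) (Fin N) ℂ) := by
      ext i j
      by_cases h : i = j <;> simp [Matrix.diagonal_apply, Matrix.one_apply, h]
    have hM : X.map (fun r => (r : ℂ)) - z • (1 : Matrix (Fin N) (Fin N) ℂ)
        = V * Matrix.diagonal (fun k => (μ k : ℂ) - z) * star V := by
      rw [hXc]
      rw [show Matrix.diagonal (fun k => (μ k : ℂ) - z)
          = Matrix.diagonal (fun k => (μ k : ℂ)) - Matrix.diagonal (fun _ => z) by
        rw [Matrix.diagonal_sub]]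
      rw [Matrix.mul_sub, Matrix.sub_mul, hdiagz, Matrix.mul_smul, Matrix.mul_one,
        Matrix.smul_mul, hVV]
    rw [hM]
    apply Matrix.inv_eq_right_inv
    simp only [Matrix.mul_assoc]
    rw [← Matrix.mul_assoc (star V) V, hVV', Matrix.one_mul,
      ← Matrix.mul_assoc (Matrix.diagonal _), Matrix.diagonal_mul_diagonal]
    rw [show (Matrix.diagonal fun k => ((μ k : ℂ) - z) * ((μ k : ℂ) - z)⁻¹)
        = (1 : Matrix (Fin N) (Fin N) ℂ) by
      rw [show (fun k => ((μ k : ℂ) - z) * ((μ k : ℂ) - z)⁻¹) = fun _ => (1:ℂ)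
        from funext fun k => mul_inv_cancel₀ (hzk k)]
      exact Matrix.diagonal_one]
    rw [Matrix.one_mul, hVV]
  -- continuity of the scalar resolvents
  have hcontf : ∀ k : Fin N, Continuous fun lam : ℝ => ((μ k : ℂ) - ((lam:ℂ) + δ * Complex.I))⁻¹ := by
    intro k
    apply Continuous.inv₀ (by continuity)
    intro lam h
    have him := congrArg Complex.im h
    simp at him
    exact hδ.ne' him
  -- the integral of the resolvent, diagonalized
  set w : Fin N → ℂ := fun k => ∫ lam in (a+γ)..(b-γ), ((μ k : ℂ) - ((lam:ℂ) + δ * Complex.I))⁻¹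
    with hwdef
  have hint : resolventInt X δ (a + γ) (b - γ) = V * Matrix.diagonal w * star V := by
    ext i j
    show (∫ lam in (a+γ)..(b-γ),
        ((X.map (fun r => (r : ℂ)) - ((lam : ℂ) + δ * Complex.I) • 1)⁻¹) i j) = _
    simp only [hres]
    simp only [aux_trip_apply]
    rw [intervalIntegral.integral_finset_sum]
    · refine Finset.sum_congr rfl fun k _ => ?_
      rw [intervalIntegral.integral_const_mul, intervalIntegral.integral_mul_const]
    · intro k _
      exact ((continuous_const.mul ((hcontf k).mul continuous_const)).intervalIntegrable _ _)
  -- the arctan values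
  set B : Fin N → ℝ := fun k =>
    Real.arctan ((b - γ - μ k)/δ) - Real.arctan ((a + γ - μ k)/δ) with hBdef
  have hct : (V * Matrix.diagonal w * star V)ᴴ
      = V * Matrix.diagonal (fun k => (starRingEnd ℂ) (w k)) * star V := by
    ext i j
    rw [Matrix.conjTranspose_apply, aux_trip_apply, aux_trip_apply, star_sum]
    refine Finset.sum_congr rfl fun k _ => ?_
    simp only [star_mul', Matrix.star_apply, star_star, Complex.star_def, Complex.conj_conj]
    ring
  have hmatIm : matIm (resolventInt X δ (a + γ) (b - γ))
      = V * Matrix.diagonal (fun k => ((B k : ℝ) : ℂ)) * star V := by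
    rw [hint]
    unfold matIm
    rw [hct, aux_sub_trip, aux_smul_trip]
    apply aux_trip_congr
    intro k
    simp only [hwdef, hBdef]
    exact aux_integral_res (μ k) δ hδ (a+γ) (b-γ)
  -- component identities
  set d : Fin N → ℝ := fun k =>
    (if μ k ∈ Set.Icc a b then (1:ℝ) else 0) + δ / (Real.pi * γ) - (1/Real.pi) * B k with hddef
  have h1 : (specProj X hX a b).map (fun r => (r : ℂ))
      = V * Matrix.diagonal (fun k => ((if μ k ∈ Set.Icc a b then (1:ℝ) else 0 : ℝ) : ℂ))
        * star V := by
    have hdiag : (Matrix.diagonal (fun k =>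
          if hX.eigenvalues k ∈ Set.Icc a b then (1:ℝ) else 0)).map Complex.ofReal
        = Matrix.diagonal (fun k => ((if μ k ∈ Set.Icc a b then (1:ℝ) else 0 : ℝ) : ℂ)) := by
      ext i j
      by_cases h : i = j <;>
        simp [Matrix.map_apply, Matrix.diagonal_apply, h, hμdef]
    show ((U * Matrix.diagonal _ * star U).map Complex.ofReal) = _
    rw [hmapmul, hmapmul, hstar, hdiag, ← hVdef]
  have hone : (1 : Matrix (Fin N) (Fin N) ℂ)
      = V * Matrix.diagonal (fun _ : Fin N => (1:ℂ)) * star V := by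
    rw [Matrix.diagonal_one, Matrix.mul_one, hVV]
  have h2 : (δ / (Real.pi * γ)) • (1 : Matrix (Fin N) (Fin N) ℂ)
      = V * Matrix.diagonal (fun _ : Fin N => ((δ / (Real.pi * γ) : ℝ) : ℂ)) * star V := by
    rw [hone, aux_real_smul, aux_smul_trip]
    apply aux_trip_congr
    intro k
    simp
  have h3 : (1 / Real.pi) • matIm (resolventInt X δ (a + γ) (b - γ))
      = V * Matrix.diagonal (fun k => (((1/Real.pi) * B k : ℝ) : ℂ)) * star V := by
    rw [hmatIm, aux_real_smul, aux_smul_trip]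
    apply aux_trip_congr
    intro k
    push_cast
    ring
  have hfinal : (specProj X hX a b).map (fun r => (r : ℂ)) +
        (δ / (Real.pi * γ)) • (1 : Matrix (Fin N) (Fin N) ℂ) -
      (1 / Real.pi) • matIm (resolventInt X δ (a + γ) (b - γ))
      = V * Matrix.diagonal (fun k => ((d k : ℝ) : ℂ)) * star V := by
    rw [h1, h2, h3, aux_add_trip, aux_sub_trip]
    apply aux_trip_congr
    intro k
    rw [hddef]
    push_cast
    ring
  rw [hfinal]
  have hd : ∀ k, 0 ≤ d k := by
    intro k
    rw [hddef]
    have hk := aux_key_ineq a b γ δ (μ k) hδ hγδ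
    have hmul : (1/Real.pi) * B k ≤ (1/Real.pi) *
        (Real.pi * (if μ k ∈ Set.Icc a b then (1:ℝ) else 0) + δ/γ) := by
      apply mul_le_mul_of_nonneg_left hk (by positivity)
    have heq : (1/Real.pi) * (Real.pi * (if μ k ∈ Set.Icc a b then (1:ℝ) else 0) + δ/γ)
        = (if μ k ∈ Set.Icc a b then (1:ℝ) else 0) + δ / (Real.pi * γ) := by
      field_simp
    simp only [heq] at hmul
    linarith
  have hdiagPSD : (Matrix.diagonal (fun k => ((d k : ℝ) : ℂ))).PosSemidef :=
    Matrix.posSemidef_diagonal_iff.mpr fun k => Complex.zero_le_real.mpr (hd k)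
  have hPSD := hdiagPSD.mul_mul_conjTranspose_same V
  rwa [← Matrix.star_eq_conjTranspose V] at hPSD
end

section
/- Let E ⊆ R^N be an m-dimensional subspace whose orthogonal projection P_E satisfies max_x (P_E)_{xx} ≤ Cm/N for some C > 0. Then for every 0 < κ < 1 and every 0 < ν < 1 with 4eC·ν·log(e/ν) ≤ κ^2, there exists a unit vector v ∈ E such that for every subset A ⊆ [N] with |A| ≤ νN, ∑_{j∈A} v_j^2 ≤ κ^2. -/
open Finset

noncomputable def sgn11 (b : Bool) : ℝ := if b then 1 else -1

lemma sgn11_sq (b : Bool) : sgn11 b ^ 2 = 1 := by cases b <;> norm_num [sgn11]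

lemma key_pt' (s lam x : ℝ) (hs0 : 0 ≤ s) (hlam : 0 < lam) :
    max (x ^ 2 - s ^ 2) 0 ≤ (4 / lam ^ 2 + 2 * s / lam) *
      ((Real.exp (lam * x) + Real.exp (-(lam * x))) * Real.exp (-(lam * s))) := by
  have hK : 0 < 4 / lam ^ 2 + 2 * s / lam := by positivity
  rcases le_or_gt (x ^ 2) (s ^ 2) with h | h
  · have : max (x ^ 2 - s ^ 2) 0 = 0 := max_eq_right (by linarith)
    rw [this]; positivity
  · have hxs : s < |x| := by nlinarith [abs_nonneg x, sq_abs x]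
    have hmax : max (x ^ 2 - s ^ 2) 0 = x ^ 2 - s ^ 2 := max_eq_left (by linarith)
    have hy0 : 0 ≤ |x| - s := by linarith
    have hE : 0 < Real.exp (lam * (|x| - s)) := Real.exp_pos _
    have h1 : 1 + lam * (|x| - s) / 2 ≤ Real.exp (lam * (|x| - s) / 2) := by
      have := Real.add_one_le_exp (lam * (|x| - s) / 2); linarith
    have h3 : Real.exp (lam * (|x| - s) / 2) ^ 2 = Real.exp (lam * (|x| - s)) := by
      rw [sq, ← Real.exp_add]; congr 1; ring
    have h1' : lam ^ 2 * (|x| - s) ^ 2 / 4 ≤ Real.exp (lam * (|x| - s)) := by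
      have hnn : 0 ≤ lam * (|x| - s) / 2 := by positivity
      nlinarith
    have hy2 : (|x| - s) ^ 2 ≤ 4 / lam ^ 2 * Real.exp (lam * (|x| - s)) := by
      have hl2 : 0 < lam ^ 2 := by positivity
      rw [div_mul_eq_mul_div, le_div_iff₀ hl2]
      nlinarith
    have hsy : 2 * s * (|x| - s) ≤ 2 * s / lam * Real.exp (lam * (|x| - s)) := by
      have hle : lam * (|x| - s) ≤ Real.exp (lam * (|x| - s)) := by
        have := Real.add_one_le_exp (lam * (|x| - s)); linarith
      rw [div_mul_eq_mul_div, le_div_iff₀ hlam]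
      nlinarith
    have hmain : x ^ 2 - s ^ 2 ≤ (4 / lam ^ 2 + 2 * s / lam) * Real.exp (lam * (|x| - s)) := by
      have hxa : x ^ 2 - s ^ 2 = (|x| - s) ^ 2 + 2 * s * (|x| - s) := by
        nlinarith [sq_abs x]
      rw [hxa]; nlinarith
    have hsplit : Real.exp (lam * (|x| - s)) = Real.exp (lam * |x|) * Real.exp (-(lam * s)) := by
      rw [← Real.exp_add]; congr 1; ring
    have habs : Real.exp (lam * |x|) ≤ Real.exp (lam * x) + Real.exp (-(lam * x)) := by
      rcases abs_cases x with ⟨he, _⟩ | ⟨he, _⟩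
      · rw [he]; nlinarith [Real.exp_pos (-(lam * x))]
      · rw [he, mul_neg, ← neg_mul]
        nlinarith [Real.exp_pos (lam * x)]
    rw [hmax]
    refine hmain.trans ?_
    rw [hsplit, ← mul_assoc, mul_assoc]
    apply mul_le_mul_of_nonneg_left _ hK.le
    exact mul_le_mul_of_nonneg_right habs (Real.exp_pos _).le

lemma key_pt (a lam x : ℝ) (ha : 0 ≤ a) (hlam : 0 < lam) :
    max (x ^ 2 - a) 0 ≤ (4 / lam ^ 2 + 2 * Real.sqrt a / lam) *
      ((Real.exp (lam * x) + Real.exp (-(lam * x))) * Real.exp (-(lam * Real.sqrt a))) := by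
  have := key_pt' (Real.sqrt a) lam x (Real.sqrt_nonneg a) hlam
  rwa [Real.sq_sqrt ha] at this

lemma mgf11 (m : ℕ) (t : Fin m → ℝ) :
    ∑ ε : Fin m → Bool, Real.exp (∑ k, sgn11 (ε k) * t k)
      ≤ 2 ^ m * Real.exp (∑ k, t k ^ 2 / 2) := by
  have h1 : ∑ ε : Fin m → Bool, Real.exp (∑ k, sgn11 (ε k) * t k)
      = ∏ k, (Real.exp (t k) + Real.exp (-(t k))) := by
    simp_rw [Real.exp_sum]
    have := Finset.prod_univ_sum (fun _ : Fin m => (univ : Finset Bool))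
      (fun k b => Real.exp (sgn11 b * t k))
    rw [Fintype.piFinset_univ] at this
    rw [← this]
    congr 1; funext k
    simp [sgn11]
  rw [h1]
  have h2 : ∀ k : Fin m, Real.exp (t k) + Real.exp (-(t k)) ≤ 2 * Real.exp (t k ^ 2 / 2) := by
    intro k
    have hc := Real.cosh_le_exp_half_sq (t k)
    rw [Real.cosh_eq] at hc
    linarith
  calc ∏ k, (Real.exp (t k) + Real.exp (-(t k)))
      ≤ ∏ k, 2 * Real.exp (t k ^ 2 / 2) := by
        apply Finset.prod_le_prod (fun k _ => by positivity) (fun k _ => h2 k)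
    _ = 2 ^ m * Real.exp (∑ k, t k ^ 2 / 2) := by
        rw [Finset.prod_mul_distrib, Real.exp_sum]
        simp

/-- averaged tail bound with free `lam` -/
lemma percoord (m : ℕ) (c : Fin m → ℝ) (a lam : ℝ) (ha : 0 ≤ a) (hlam : 0 < lam) :
    ∑ ε : Fin m → Bool, max ((∑ k, sgn11 (ε k) * c k) ^ 2 - a) 0
      ≤ 2 ^ m * ((4 / lam ^ 2 + 2 * Real.sqrt a / lam) * 2 *
          Real.exp (lam ^ 2 * (∑ k, c k ^ 2) / 2 - lam * Real.sqrt a)) := by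
  set K := 4 / lam ^ 2 + 2 * Real.sqrt a / lam with hKdef
  have hK : 0 < K := by positivity
  have step1 : ∑ ε : Fin m → Bool, max ((∑ k, sgn11 (ε k) * c k) ^ 2 - a) 0
      ≤ ∑ ε : Fin m → Bool, K * ((Real.exp (lam * ∑ k, sgn11 (ε k) * c k)
          + Real.exp (-(lam * ∑ k, sgn11 (ε k) * c k))) * Real.exp (-(lam * Real.sqrt a))) :=
    Finset.sum_le_sum fun ε _ => key_pt a lam _ ha hlam
  have hmgf1 : ∑ ε : Fin m → Bool, Real.exp (lam * ∑ k, sgn11 (ε k) * c k)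
      ≤ 2 ^ m * Real.exp (lam ^ 2 * (∑ k, c k ^ 2) / 2) := by
    have := mgf11 m (fun k => lam * c k)
    have e1 : ∀ ε : Fin m → Bool, (∑ k, sgn11 (ε k) * (lam * c k))
        = lam * ∑ k, sgn11 (ε k) * c k := by
      intro ε; rw [Finset.mul_sum]; congr 1; funext k; ring
    have e2 : (∑ k, (lam * c k) ^ 2 / 2) = lam ^ 2 * (∑ k, c k ^ 2) / 2 := by
      rw [Finset.mul_sum, Finset.sum_div]; congr 1; funext k; ring
    simp_rw [e1, e2] at this; exact this
  have hmgf2 : ∑ ε : Fin m → Bool, Real.exp (-(lam * ∑ k, sgn11 (ε k) * c k))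
      ≤ 2 ^ m * Real.exp (lam ^ 2 * (∑ k, c k ^ 2) / 2) := by
    have := mgf11 m (fun k => -(lam * c k))
    have e1 : ∀ ε : Fin m → Bool, (∑ k, sgn11 (ε k) * (-(lam * c k)))
        = -(lam * ∑ k, sgn11 (ε k) * c k) := by
      intro ε; rw [Finset.mul_sum, ← Finset.sum_neg_distrib]; congr 1; funext k; ring
    have e2 : (∑ k, (-(lam * c k)) ^ 2 / 2) = lam ^ 2 * (∑ k, c k ^ 2) / 2 := by
      rw [Finset.mul_sum, Finset.sum_div]; congr 1; funext k; ring
    simp_rw [e1, e2] at this; exact this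
  refine step1.trans ?_
  have hrw : ∀ ε : Fin m → Bool,
      K * ((Real.exp (lam * ∑ k, sgn11 (ε k) * c k)
        + Real.exp (-(lam * ∑ k, sgn11 (ε k) * c k))) * Real.exp (-(lam * Real.sqrt a)))
      = K * Real.exp (-(lam * Real.sqrt a)) * Real.exp (lam * ∑ k, sgn11 (ε k) * c k)
        + K * Real.exp (-(lam * Real.sqrt a)) * Real.exp (-(lam * ∑ k, sgn11 (ε k) * c k)) := by
    intro ε; ring
  rw [Finset.sum_congr rfl (fun ε _ => hrw ε), Finset.sum_add_distrib, ← Finset.mul_sum,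
    ← Finset.mul_sum]
  have hKE : 0 ≤ K * Real.exp (-(lam * Real.sqrt a)) := by positivity
  have := add_le_add (mul_le_mul_of_nonneg_left hmgf1 hKE) (mul_le_mul_of_nonneg_left hmgf2 hKE)
  refine this.trans (le_of_eq ?_)
  rw [Real.exp_sub, Real.exp_neg]
  ring

lemma percoord2 (m : ℕ) (c : Fin m → ℝ) (a σ2 : ℝ) (hσ : ∑ k, c k ^ 2 = σ2)
    (hσpos : 0 < σ2) (ha : 4 * σ2 ≤ a) :
    ∑ ε : Fin m → Bool, max ((∑ k, sgn11 (ε k) * c k) ^ 2 - a) 0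
      ≤ 2 ^ m * (6 * σ2 * Real.exp (-(a / (2 * σ2)))) := by
  have ha0 : 0 < a := by linarith
  have hs2 : Real.sqrt a ^ 2 = a := Real.sq_sqrt ha0.le
  have hspos : 0 < Real.sqrt a := Real.sqrt_pos.2 ha0
  have hlam : 0 < Real.sqrt a / σ2 := by positivity
  have h := percoord m c a (Real.sqrt a / σ2) ha0.le hlam
  rw [hσ] at h
  refine h.trans ?_
  apply mul_le_mul_of_nonneg_left _ (by positivity)
  have hexp : (Real.sqrt a / σ2) ^ 2 * σ2 / 2 - Real.sqrt a / σ2 * Real.sqrt a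
      = -(a / (2 * σ2)) := by
    rw [div_pow, hs2]
    field_simp
    linarith [hs2]
  rw [hexp]
  have h1 : 2 * Real.sqrt a / (Real.sqrt a / σ2) = 2 * σ2 := by
    field_simp
  have h2 : 4 / (Real.sqrt a / σ2) ^ 2 = 4 * σ2 ^ 2 / a := by
    rw [div_pow, hs2]
    field_simp
  have h3 : 4 * σ2 ^ 2 / a ≤ σ2 := by
    rw [div_le_iff₀ ha0]; nlinarith
  have hco : 4 / (Real.sqrt a / σ2) ^ 2 + 2 * Real.sqrt a / (Real.sqrt a / σ2) ≤ 3 * σ2 := by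
    rw [h1, h2]; linarith
  have hE : 0 < Real.exp (-(a / (2 * σ2))) := Real.exp_pos _
  nlinarith

lemma mono11 {x y a : ℝ} (ha : 0 ≤ a) (hx : 0 < x) (hxy : x ≤ y) :
    x * Real.exp (-(a / (2 * x))) ≤ y * Real.exp (-(a / (2 * y))) := by
  have hy : 0 < y := lt_of_lt_of_le hx hxy
  have hE : Real.exp (-(a / (2 * x))) ≤ Real.exp (-(a / (2 * y))) := by
    apply Real.exp_le_exp.2
    have : a / (2 * y) ≤ a / (2 * x) := by gcongr
    linarith
  exact mul_le_mul hxy hE (Real.exp_pos _).le hy.le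

lemma numeric11 (C κ ν : ℝ) (hC : 0 < C) (hκ0 : 0 < κ) (hν0 : 0 < ν) (hν1 : ν < 1)
    (hνκ : 4 * Real.exp 1 * C * ν * Real.log (Real.exp 1 / ν) ≤ κ ^ 2) :
    6 * C * Real.exp (-(κ ^ 2 / (4 * ν * C))) ≤ κ ^ 2 / 2 := by
  have hLe : Real.exp (Real.log (Real.exp 1 / ν)) = Real.exp 1 / ν :=
    Real.exp_log (by positivity)
  have hL1 : 1 ≤ Real.log (Real.exp 1 / ν) := by
    rw [Real.log_div (Real.exp_ne_zero 1) hν0.ne', Real.log_exp]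
    have := Real.log_nonpos hν0.le hν1.le; linarith
  have he2 : (2:ℝ) ≤ Real.exp 1 := by
    have := Real.exp_one_gt_d9; linarith
  set L := Real.log (Real.exp 1 / ν) with hLdef
  set t := κ ^ 2 / (4 * ν * C) with htdef
  have ht : Real.exp 1 * L ≤ t := by
    rw [htdef, le_div_iff₀ (by positivity)]
    nlinarith
  have ht2 : 2 * L ≤ t := by nlinarith
  have hexp2 : (Real.exp 1 / ν) ^ 2 ≤ Real.exp t := by
    have h1 : (Real.exp 1 / ν) ^ 2 = Real.exp (2 * L) := by
      rw [two_mul, Real.exp_add, hLe]; ring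
    rw [h1]; exact Real.exp_le_exp.2 ht2
  have key : 12 * C ≤ κ ^ 2 * Real.exp t := by
    have h1 : 4 * Real.exp 1 * C * ν * L * ((Real.exp 1 / ν) ^ 2)
        ≤ κ ^ 2 * Real.exp t :=
      mul_le_mul hνκ hexp2 (by positivity) (by positivity)
    have h2 : ∀ x : ℝ, 4 * x * C * ν * L * ((x / ν) ^ 2)
        = 4 * x ^ 3 * C * L / ν := by
      intro x; field_simp
    have h2 := h2 (Real.exp 1)
    have he3 : (8:ℝ) ≤ (Real.exp 1) ^ 3 := by
      nlinarith [mul_nonneg (mul_nonneg (sub_nonneg.2 he2) (Real.exp_pos 1).le)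
        (Real.exp_pos 1).le, mul_nonneg (sub_nonneg.2 he2) (sub_nonneg.2 he2), he2]
    have h3 : 12 * C ≤ 4 * (Real.exp 1) ^ 3 * C * L / ν := by
      rw [le_div_iff₀ hν0]
      nlinarith [mul_nonneg hC.le (sub_nonneg.2 hL1)]
    linarith
  rw [Real.exp_neg, ← div_eq_mul_inv, div_le_iff₀ (Real.exp_pos t)]
  linarith

/-- If `E ⊆ ℝ^N` is an `m`-dimensional subspace whose orthogonal projection
has diagonal entries at most `C m / N`, then for `0 < κ < 1` and `0 < ν < 1` with
`4 e C ν log(e/ν) ≤ κ²`, there is a unit vector `v ∈ E` with `∑_{j ∈ A} v_j² ≤ κ²`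
whenever `|A| ≤ ν N`. -/
theorem stmt11 {N m : ℕ} (hm : 0 < m) (E : Submodule ℝ (EuclideanSpace ℝ (Fin N)))
    (hdim : Module.finrank ℝ E = m) (C : ℝ) (hC : 0 < C)
    (hdiag : ∀ x : Fin N,
      ((Submodule.orthogonalProjection E (EuclideanSpace.single x 1)) : EuclideanSpace ℝ (Fin N)) x ≤
        C * m / N)
    (κ ν : ℝ) (hκ0 : 0 < κ) (hκ1 : κ < 1) (hν0 : 0 < ν) (hν1 : ν < 1)
    (hνκ : 4 * Real.exp 1 * C * ν * Real.log (Real.exp 1 / ν) ≤ κ ^ 2) :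
    ∃ v : EuclideanSpace ℝ (Fin N), v ∈ E ∧ ‖v‖ = 1 ∧
      ∀ A : Finset (Fin N), (A.card : ℝ) ≤ ν * N → ∑ j ∈ A, v j ^ 2 ≤ κ ^ 2 := by
  classical
  have hmN : m ≤ N := by
    have h := Submodule.finrank_le E
    rw [hdim, finrank_euclideanSpace_fin] at h
    exact h
  have hN : 0 < N := lt_of_lt_of_le hm hmN
  have hNR : (0:ℝ) < N := by exact_mod_cast hN
  have hmR : (0:ℝ) < m := by exact_mod_cast hm
  -- numeric facts
  have he2 : (2:ℝ) ≤ Real.exp 1 := by have := Real.exp_one_gt_d9; linarith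
  have hL1 : 1 ≤ Real.log (Real.exp 1 / ν) := by
    rw [Real.log_div (Real.exp_ne_zero 1) hν0.ne', Real.log_exp]
    have := Real.log_nonpos hν0.le hν1.le; linarith
  have h8 : 8 * C * ν ≤ κ ^ 2 := by
    have hx : (0:ℝ) < 4 * Real.exp 1 * C * ν := by positivity
    have e2 := le_mul_of_one_le_right hx.le hL1
    have e1 : 8 * C * ν ≤ 4 * Real.exp 1 * C * ν := by nlinarith [mul_pos hC hν0]
    linarith
  -- orthonormal basis
  let b : OrthonormalBasis (Fin m) ℝ E :=
    (stdOrthonormalBasis ℝ E).reindex (finCongr (by rw [hdim]))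
  let u : Fin m → EuclideanSpace ℝ (Fin N) := fun k => (b k : EuclideanSpace ℝ (Fin N))
  -- diagonal identity
  have hPdiag : ∀ j : Fin N, ∑ k, (u k j) ^ 2 ≤ C * m / N := by
    intro j
    have h := b.orthogonalProjectionOnto_apply_eq_sum (EuclideanSpace.single j (1:ℝ))
    have h2 : ((Submodule.orthogonalProjection E (EuclideanSpace.single j 1)) :
        EuclideanSpace ℝ (Fin N)) j = ∑ k, (u k j) ^ 2 := by
      rw [h, Submodule.coe_sum, WithLp.ofLp_sum, Finset.sum_apply]
      refine Finset.sum_congr rfl fun k _ => ?_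
      rw [Submodule.coe_smul, PiLp.smul_apply, smul_eq_mul,
        EuclideanSpace.inner_single_right]
      simp [u, sq]
    rw [← h2]
    exact hdiag j
  -- variance
  set s2 : Fin N → ℝ := fun j => (∑ k, (u k j) ^ 2) / m with hs2def
  set cc : Fin N → Fin m → ℝ := fun j k => u k j / Real.sqrt m with hccdef
  have hcc : ∀ j, ∑ k, cc j k ^ 2 = s2 j := by
    intro j
    show ∑ k, (u k j / Real.sqrt m) ^ 2 = (∑ k, u k j ^ 2) / m
    simp_rw [div_pow, Real.sq_sqrt hmR.le]
    rw [← Finset.sum_div]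
  have hs2nn : ∀ j, 0 ≤ s2 j := fun j =>
    div_nonneg (Finset.sum_nonneg fun k _ => sq_nonneg _) hmR.le
  have hs2le : ∀ j, s2 j ≤ C / N := by
    intro j
    show (∑ k, u k j ^ 2) / m ≤ C / N
    rw [div_le_div_iff₀ hmR hNR]
    have h2 : (∑ k, u k j ^ 2) * N ≤ (C * m / N) * N :=
      mul_le_mul_of_nonneg_right (hPdiag j) hNR.le
    have h3 : (C * m / N) * N = C * m := by field_simp
    linarith
  set a : ℝ := κ ^ 2 / (2 * ν * N) with hadef
  have ha0 : 0 < a := by positivity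
  have h4a : ∀ j, 4 * s2 j ≤ a := by
    intro j
    have h1 : 4 * s2 j ≤ 4 * (C / N) := by linarith [hs2le j]
    refine h1.trans ?_
    rw [hadef, le_div_iff₀ (by positivity)]
    have h5 : 4 * (C / N) * (2 * ν * N) = 8 * C * ν := by field_simp; ring
    rw [h5]; exact h8
  -- per-coordinate bound
  have hperj : ∀ j : Fin N,
      ∑ ε : Fin m → Bool, max ((∑ k, sgn11 (ε k) * cc j k) ^ 2 - a) 0
        ≤ 2 ^ m * (6 * (C / N) * Real.exp (-(a / (2 * (C / N))))) := by
    intro j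
    rcases eq_or_lt_of_le (hs2nn j) with h0 | hpos
    · have hzero : ∀ k, cc j k = 0 := by
        intro k
        have hsum : ∑ k, cc j k ^ 2 = 0 := by rw [hcc j, ← h0]
        have := (Finset.sum_eq_zero_iff_of_nonneg
          (fun k _ => sq_nonneg (cc j k))).1 hsum k (mem_univ k)
        exact pow_eq_zero_iff (by norm_num) |>.1 this
      have hz2 : ∀ ε : Fin m → Bool, (∑ k, sgn11 (ε k) * cc j k) = 0 := by
        intro ε; refine Finset.sum_eq_zero fun k _ => by rw [hzero k, mul_zero]
      have : ∀ ε : Fin m → Bool, max ((∑ k, sgn11 (ε k) * cc j k) ^ 2 - a) 0 = 0 := by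
        intro ε; rw [hz2 ε]; exact max_eq_right (by nlinarith)
      rw [Finset.sum_congr rfl fun ε _ => this ε, Finset.sum_const, smul_zero]
      positivity
    · refine (percoord2 m (cc j) a (s2 j) (hcc j) hpos (h4a j)).trans ?_
      apply mul_le_mul_of_nonneg_left _ (by positivity)
      have := mono11 (a := a) ha0.le hpos (hs2le j)
      linarith
  -- sum over j and ε
  set B : ℝ := 6 * C * Real.exp (-(a * N / (2 * C))) with hBdef
  have hBrw : a / (2 * (C / N)) = a * N / (2 * C) := by
    field_simp
  have hsum : ∑ ε : Fin m → Bool, ∑ j, max ((∑ k, sgn11 (ε k) * cc j k) ^ 2 - a) 0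
      ≤ 2 ^ m * B := by
    rw [Finset.sum_comm]
    have h1 : ∑ j : Fin N, ∑ ε : Fin m → Bool,
        max ((∑ k, sgn11 (ε k) * cc j k) ^ 2 - a) 0
        ≤ ∑ j : Fin N, 2 ^ m * (6 * (C / N) * Real.exp (-(a / (2 * (C / N))))) :=
      Finset.sum_le_sum fun j _ => hperj j
    refine h1.trans (le_of_eq ?_)
    rw [Finset.sum_const, card_univ, Fintype.card_fin, nsmul_eq_mul, hBrw, hBdef]
    field_simp
  -- choose a good sign pattern
  obtain ⟨ε₀, -, hF⟩ := Finset.exists_le_of_sum_le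
    (Finset.univ_nonempty (α := Fin m → Bool))
    (hsum.trans (le_of_eq (by
      rw [Finset.sum_const, card_univ]
      simp [Fintype.card_fun] )) :
      ∑ ε : Fin m → Bool, ∑ j, max ((∑ k, sgn11 (ε k) * cc j k) ^ 2 - a) 0
        ≤ ∑ _ε : Fin m → Bool, B)
  -- the vector
  set w : E := ∑ k, (sgn11 (ε₀ k) / Real.sqrt m) • b k with hwdef
  have hv : ∀ j, (w : EuclideanSpace ℝ (Fin N)) j = ∑ k, sgn11 (ε₀ k) * cc j k := by
    intro j
    rw [hwdef, Submodule.coe_sum, WithLp.ofLp_sum, Finset.sum_apply]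
    refine Finset.sum_congr rfl fun k _ => ?_
    rw [Submodule.coe_smul, PiLp.smul_apply, smul_eq_mul, hccdef]
    show sgn11 (ε₀ k) / Real.sqrt m * u k j = sgn11 (ε₀ k) * (u k j / Real.sqrt m)
    ring
  have hnorm : ‖(w : EuclideanSpace ℝ (Fin N))‖ = 1 := by
    rw [← Submodule.coe_norm, ← b.repr.norm_map w]
    have hrepr : b.repr w = ∑ k, (sgn11 (ε₀ k) / Real.sqrt m) • EuclideanSpace.single k 1 := by
      rw [hwdef, map_sum]
      refine Finset.sum_congr rfl fun k _ => ?_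
      rw [map_smul, b.repr_self]
    rw [hrepr]
    have happ : ∀ i : Fin m,
        (∑ k, (sgn11 (ε₀ k) / Real.sqrt m) • EuclideanSpace.single k (1:ℝ)) i
          = sgn11 (ε₀ i) / Real.sqrt m := by
      intro i
      rw [WithLp.ofLp_sum, Finset.sum_apply]
      simp only [PiLp.smul_apply, EuclideanSpace.single_apply, smul_eq_mul]
      rw [Finset.sum_eq_single i (fun k _ hk => by simp [Ne.symm hk]) (by simp)]
      simp
    rw [EuclideanSpace.norm_eq]
    have : ∀ i : Fin m, ‖(∑ k, (sgn11 (ε₀ k) / Real.sqrt m) •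
        EuclideanSpace.single k (1:ℝ)) i‖ ^ 2 = 1 / m := by
      intro i
      rw [happ i, Real.norm_eq_abs, sq_abs, div_pow, sgn11_sq, Real.sq_sqrt hmR.le]
    rw [Finset.sum_congr rfl fun i _ => this i, Finset.sum_const, card_univ,
      Fintype.card_fin, nsmul_eq_mul]
    rw [mul_one_div, div_self hmR.ne', Real.sqrt_one]
  refine ⟨(w : EuclideanSpace ℝ (Fin N)), w.2, hnorm, ?_⟩
  intro A hA
  have hstep1 : ∀ j, ((w : EuclideanSpace ℝ (Fin N)) j) ^ 2
      ≤ a + max (((∑ k, sgn11 (ε₀ k) * cc j k)) ^ 2 - a) 0 := by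
    intro j
    rw [hv j]
    have := le_max_left ((∑ k, sgn11 (ε₀ k) * cc j k) ^ 2 - a) 0
    linarith
  calc ∑ j ∈ A, ((w : EuclideanSpace ℝ (Fin N)) j) ^ 2
      ≤ ∑ j ∈ A, (a + max (((∑ k, sgn11 (ε₀ k) * cc j k)) ^ 2 - a) 0) :=
        Finset.sum_le_sum fun j _ => hstep1 j
    _ = A.card * a + ∑ j ∈ A, max (((∑ k, sgn11 (ε₀ k) * cc j k)) ^ 2 - a) 0 := by
        rw [Finset.sum_add_distrib, Finset.sum_const, nsmul_eq_mul]
    _ ≤ ν * N * a + ∑ j, max (((∑ k, sgn11 (ε₀ k) * cc j k)) ^ 2 - a) 0 := by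
        refine add_le_add (mul_le_mul_of_nonneg_right hA ha0.le) ?_
        exact Finset.sum_le_sum_of_subset_of_nonneg (Finset.subset_univ A)
          (fun j _ _ => le_max_right _ _)
    _ ≤ ν * N * a + B := by linarith [hF]
    _ ≤ κ ^ 2 / 2 + κ ^ 2 / 2 := by
        have hhalf : ν * N * a = κ ^ 2 / 2 := by
          rw [hadef]; field_simp
        have hBle : B ≤ κ ^ 2 / 2 := by
          have harg : a * N / (2 * C) = κ ^ 2 / (4 * ν * C) := by
            rw [hadef]; field_simp; ring
          rw [hBdef, harg]
          exact numeric11 C κ ν hC hκ0 hν0 hν1 hνκ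
        linarith
    _ = κ ^ 2 := by ring
end

section
/- For 0 ≤ u ≤ 4, the integral ∫_{2−u}^{2} (1/(2π))·√((2−x)(2+x)) dx is bounded below by (2√(1−u/4)/(3π))·u^{3/2} and above by (2/(3π))·u^{3/2}. -/
open intervalIntegral

lemma sqrt_int (u : ℝ) (hu : 0 ≤ u) :
    ∫ x in (2 - u)..2, Real.sqrt (2 - x) = 2 / 3 * u ^ ((3 : ℝ) / 2) := by
  have hderiv : ∀ x ∈ Set.uIcc (2 - u) 2,
      HasDerivAt (fun x : ℝ => -(2 / 3) * (2 - x) ^ ((3 : ℝ) / 2))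
        (Real.sqrt (2 - x)) x := by
    intro x _
    have h1 : HasDerivAt (fun x : ℝ => 2 - x) (-1) x := (hasDerivAt_id x).const_sub 2
    have h2 := (Real.hasDerivAt_rpow_const (x := 2 - x) (p := (3 : ℝ) / 2)
      (Or.inr (by norm_num))).comp x h1
    have h3 : HasDerivAt (fun y : ℝ => -(2 / 3) * (2 - y) ^ ((3 : ℝ) / 2))
        (-(2 / 3) * (3 / 2 * (2 - x) ^ ((3 : ℝ) / 2 - 1) * -1)) x := h2.const_mul (-(2 / 3) : ℝ)
    convert h3 using 1
    rw [Real.sqrt_eq_rpow]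
    have : (3 : ℝ) / 2 - 1 = 1 / 2 := by norm_num
    rw [this]; ring
  have hint : IntervalIntegrable (fun x => Real.sqrt (2 - x)) MeasureTheory.volume (2 - u) 2 :=
    ((continuous_const.sub continuous_id).sqrt).intervalIntegrable _ _
  rw [intervalIntegral.integral_eq_sub_of_hasDerivAt hderiv hint]
  have h0 : ((2 : ℝ) - 2) = 0 := by norm_num
  simp only [h0, sub_sub_cancel]
  rw [Real.zero_rpow (by norm_num : ((3 : ℝ) / 2) ≠ 0)]
  ring

/-- For `0 ≤ u ≤ 4`,
`(2√(1-u/4)/(3π)) u^{3/2} ≤ ∫_{2-u}^{2} (1/(2π)) √((2-x)(2+x)) dx ≤ (2/(3π)) u^{3/2}`. -/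
theorem stmt12 (u : ℝ) (hu0 : 0 ≤ u) (hu4 : u ≤ 4) :
    2 * Real.sqrt (1 - u / 4) / (3 * Real.pi) * u ^ ((3 : ℝ) / 2) ≤
      (∫ x in (2 - u)..2, (1 / (2 * Real.pi)) * Real.sqrt ((2 - x) * (2 + x))) ∧
    (∫ x in (2 - u)..2, (1 / (2 * Real.pi)) * Real.sqrt ((2 - x) * (2 + x))) ≤
      2 / (3 * Real.pi) * u ^ ((3 : ℝ) / 2) := by
  have hle : (2 : ℝ) - u ≤ 2 := by linarith
  have hpi : (0 : ℝ) < Real.pi := Real.pi_pos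
  have hintF : IntervalIntegrable
      (fun x => (1 / (2 * Real.pi)) * Real.sqrt ((2 - x) * (2 + x)))
      MeasureTheory.volume (2 - u) 2 := by
    apply Continuous.intervalIntegrable
    exact continuous_const.mul (((continuous_const.sub continuous_id).mul
      (continuous_const.add continuous_id)).sqrt)
  have hintG : ∀ c : ℝ, IntervalIntegrable (fun x => c * Real.sqrt (2 - x))
      MeasureTheory.volume (2 - u) 2 := fun c => by
    apply Continuous.intervalIntegrable
    exact continuous_const.mul ((continuous_const.sub continuous_id).sqrt)
  have hsqrt4u : Real.sqrt (4 - u) = 2 * Real.sqrt (1 - u / 4) := by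
    have : (4 : ℝ) - u = 4 * (1 - u / 4) := by ring
    rw [this, Real.sqrt_mul (by norm_num : (0:ℝ) ≤ 4),
      show (4:ℝ) = 2^2 by norm_num, Real.sqrt_sq (by norm_num : (0:ℝ) ≤ 2)]
  constructor
  · -- lower bound
    have hmono : ∫ x in (2 - u)..2, (Real.sqrt (4 - u) / (2 * Real.pi)) * Real.sqrt (2 - x) ≤
        ∫ x in (2 - u)..2, (1 / (2 * Real.pi)) * Real.sqrt ((2 - x) * (2 + x)) := by
      apply intervalIntegral.integral_mono_on hle (hintG _) hintF
      intro x hx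
      obtain ⟨hx1, hx2⟩ := hx
      have h2x : 0 ≤ 2 - x := by linarith
      have h4u : (0:ℝ) ≤ 4 - u := by linarith
      have key : Real.sqrt (4 - u) * Real.sqrt (2 - x) ≤ Real.sqrt ((2 - x) * (2 + x)) := by
        rw [← Real.sqrt_mul h4u]
        apply Real.sqrt_le_sqrt
        have : (4 - u) * (2 - x) ≤ (2 + x) * (2 - x) := by nlinarith
        nlinarith
      calc Real.sqrt (4 - u) / (2 * Real.pi) * Real.sqrt (2 - x)
          = 1 / (2 * Real.pi) * (Real.sqrt (4 - u) * Real.sqrt (2 - x)) := by ring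
        _ ≤ 1 / (2 * Real.pi) * Real.sqrt ((2 - x) * (2 + x)) := by
            apply mul_le_mul_of_nonneg_left key
            positivity
    calc 2 * Real.sqrt (1 - u / 4) / (3 * Real.pi) * u ^ ((3 : ℝ) / 2)
        = ∫ x in (2 - u)..2, (Real.sqrt (4 - u) / (2 * Real.pi)) * Real.sqrt (2 - x) := by
          rw [intervalIntegral.integral_const_mul, sqrt_int u hu0, hsqrt4u]
          field_simp
      _ ≤ _ := hmono
  · -- upper bound
    have hmono : ∫ x in (2 - u)..2, (1 / (2 * Real.pi)) * Real.sqrt ((2 - x) * (2 + x)) ≤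
        ∫ x in (2 - u)..2, (1 / Real.pi) * Real.sqrt (2 - x) := by
      apply intervalIntegral.integral_mono_on hle hintF (hintG _)
      intro x hx
      obtain ⟨hx1, hx2⟩ := hx
      have h2x : 0 ≤ 2 - x := by linarith
      have key : Real.sqrt ((2 - x) * (2 + x)) ≤ 2 * Real.sqrt (2 - x) := by
        have h4 : Real.sqrt ((2 - x) * 4) = 2 * Real.sqrt (2 - x) := by
          rw [Real.sqrt_mul h2x]
          rw [show (4:ℝ) = 2^2 by norm_num, Real.sqrt_sq (by norm_num : (0:ℝ) ≤ 2)]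
          ring
        rw [← h4]
        apply Real.sqrt_le_sqrt
        nlinarith
      calc 1 / (2 * Real.pi) * Real.sqrt ((2 - x) * (2 + x))
          ≤ 1 / (2 * Real.pi) * (2 * Real.sqrt (2 - x)) := by
            apply mul_le_mul_of_nonneg_left key
            positivity
        _ = 1 / Real.pi * Real.sqrt (2 - x) := by
            field_simp
    calc (∫ x in (2 - u)..2, (1 / (2 * Real.pi)) * Real.sqrt ((2 - x) * (2 + x)))
        ≤ ∫ x in (2 - u)..2, (1 / Real.pi) * Real.sqrt (2 - x) := hmono
      _ = 2 / (3 * Real.pi) * u ^ ((3 : ℝ) / 2) := by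
          rw [intervalIntegral.integral_const_mul, sqrt_int u hu0]
          ring
end

section
/- For any unit vector v ∈ S^{N-1}, any 0 < ε < 1, any 0 < κ < 1−ε, any positive integer L ≤ N, and any N×N matrix X: if ∑_{j∈A} v_j^2 ≤ κ^2 for all A ⊆ [N] with |A| ≤ L, then ‖Xv‖_2 ≤ L^{-1/2}·sup_{‖w‖_∞ ≤ 1}‖Xw‖_2 + κ‖X‖, where the decomposition v = v^+ + v^- with v^+_i = v_i·1_{|v_i| > L^{-1/2}} is used. -/
/-- The ℓ²→ℓ² operator norm of a real `N × N` matrix. -/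
noncomputable def opNormR {N : ℕ} (M : Matrix (Fin N) (Fin N) ℝ) : ℝ :=
  ‖(Matrix.toEuclideanLin M).toContinuousLinearMap‖

lemma stmt13_key {N : ℕ} (X : Matrix (Fin N) (Fin N) ℝ) (u : Fin N → ℝ) :
    Real.sqrt (∑ i, (∑ j, X i j * u j) ^ 2) =
    ‖(Matrix.toEuclideanLin X).toContinuousLinearMap
      ((WithLp.linearEquiv 2 ℝ (Fin N → ℝ)).symm u)‖ := by
  rw [LinearMap.coe_toContinuousLinearMap']
  rw [show ((WithLp.linearEquiv 2 ℝ (Fin N → ℝ)).symm u) = (WithLp.equiv 2 _).symm u from rfl,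
    WithLp.equiv_symm_apply, Matrix.toEuclideanLin_apply_piLp_toLp]
  rw [EuclideanSpace.norm_eq]
  congr 1
  apply Finset.sum_congr rfl
  intro i _
  simp [Matrix.mulVec, dotProduct, sq_abs]

lemma stmt13_norm_eq {N : ℕ} (u : Fin N → ℝ) :
    ‖(WithLp.linearEquiv 2 ℝ (Fin N → ℝ)).symm u‖ = Real.sqrt (∑ i, u i ^ 2) := by
  rw [show ((WithLp.linearEquiv 2 ℝ (Fin N → ℝ)).symm u) = (WithLp.equiv 2 _).symm u from rfl,
    EuclideanSpace.norm_eq]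
  congr 1
  apply Finset.sum_congr rfl
  intro i _
  simp [sq_abs]

/-- If a unit vector `v` is `(L,κ)`-delocalized, then
`‖Xv‖₂ ≤ L^{-1/2} sup_{‖w‖_∞ ≤ 1} ‖Xw‖₂ + κ ‖X‖`. -/
theorem stmt13 {N : ℕ} (v : Fin N → ℝ) (hv : ∑ j, v j ^ 2 = 1)
    (ε κ : ℝ) (hε0 : 0 < ε) (hε1 : ε < 1) (hκ0 : 0 < κ) (hκ1 : κ < 1 - ε)
    (L : ℕ) (hL1 : 1 ≤ L) (hLN : L ≤ N)
    (X : Matrix (Fin N) (Fin N) ℝ)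
    (hdeloc : ∀ A : Finset (Fin N), A.card ≤ L → ∑ j ∈ A, v j ^ 2 ≤ κ ^ 2) :
    Real.sqrt (∑ i, (∑ j, X i j * v j) ^ 2) ≤
      (L : ℝ) ^ (-(1 : ℝ) / 2) *
        (⨆ w : {w : Fin N → ℝ // ∀ i, |w i| ≤ 1},
          Real.sqrt (∑ i, (∑ j, X i j * w.1 j) ^ 2)) +
      κ * opNormR X := by
  classical
  set T := (Matrix.toEuclideanLin X).toContinuousLinearMap with hT
  set e := (WithLp.linearEquiv 2 ℝ (Fin N → ℝ)).symm with he
  have hLpos : (0:ℝ) < L := by exact_mod_cast hL1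
  -- the big set
  set S : Finset (Fin N) := Finset.univ.filter (fun i => 1 / (L:ℝ) < v i ^ 2) with hS
  set vp : Fin N → ℝ := fun i => if i ∈ S then v i else 0 with hvp
  set vm : Fin N → ℝ := fun i => if i ∈ S then 0 else v i with hvm
  have hsplit : v = vp + vm := by
    funext i
    simp only [hvp, hvm, Pi.add_apply]
    by_cases h : i ∈ S <;> simp [h]
  -- card of S ≤ L
  have hScard : S.card ≤ L := by
    by_contra h
    push_neg at h
    have h1 : (S.card : ℝ) * (1 / (L:ℝ)) ≤ ∑ j ∈ S, v j ^ 2 := by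
      calc (S.card : ℝ) * (1 / (L:ℝ)) = ∑ _j ∈ S, 1 / (L:ℝ) := by
            rw [Finset.sum_const, nsmul_eq_mul]
        _ ≤ ∑ j ∈ S, v j ^ 2 :=
            Finset.sum_le_sum fun j hj => le_of_lt (Finset.mem_filter.mp hj).2
    have h2 : ∑ j ∈ S, v j ^ 2 ≤ 1 := by
      rw [← hv]
      exact Finset.sum_le_sum_of_subset_of_nonneg (Finset.subset_univ S)
        (fun i _ _ => sq_nonneg _)
    have h3 : ((L:ℝ) + 1) * (1 / (L:ℝ)) ≤ (S.card : ℝ) * (1 / (L:ℝ)) := by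
      apply mul_le_mul_of_nonneg_right _ (by positivity)
      exact_mod_cast Nat.succ_le_of_lt h
    have h4 : (1:ℝ) < ((L:ℝ) + 1) * (1 / (L:ℝ)) := by
      rw [mul_one_div, lt_div_iff₀ hLpos, one_mul]
      linarith
    linarith
  -- norm of vp part
  have hvpnorm : ‖e vp‖ ≤ κ := by
    rw [stmt13_norm_eq]
    have : ∑ i, vp i ^ 2 = ∑ j ∈ S, v j ^ 2 := by
      rw [← Finset.sum_filter_add_sum_filter_not Finset.univ (· ∈ S) (fun i => vp i ^ 2)]
      have e1 : ∑ i ∈ Finset.univ.filter (· ∈ S), vp i ^ 2 = ∑ j ∈ S, v j ^ 2 := by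
        rw [Finset.filter_mem_eq_inter, Finset.univ_inter]
        apply Finset.sum_congr rfl
        intro i hi; simp [hvp, hi]
      have e2 : ∑ i ∈ Finset.univ.filter (¬ · ∈ S), vp i ^ 2 = 0 := by
        apply Finset.sum_eq_zero
        intro i hi
        have := (Finset.mem_filter.mp hi).2
        simp [hvp, this]
      rw [e1, e2, add_zero]
    rw [this]
    have := hdeloc S hScard
    calc Real.sqrt (∑ j ∈ S, v j ^ 2) ≤ Real.sqrt (κ ^ 2) := Real.sqrt_le_sqrt this
      _ = κ := Real.sqrt_sq hκ0.le
  -- bound for the Xvp term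
  have hXvp : ‖T (e vp)‖ ≤ κ * opNormR X := by
    calc ‖T (e vp)‖ ≤ ‖T‖ * ‖e vp‖ := T.le_opNorm _
      _ ≤ ‖T‖ * κ := by
          apply mul_le_mul_of_nonneg_left hvpnorm (norm_nonneg _)
      _ = κ * opNormR X := by rw [mul_comm]; rfl
  -- vm has small entries
  have hvm_small : ∀ i, |vm i| ≤ (L:ℝ) ^ (-(1:ℝ)/2) := by
    intro i
    simp only [hvm]
    by_cases h : i ∈ S
    · simp only [h, if_true, abs_zero]
      positivity
    · simp only [h, if_false]
      have h1 : v i ^ 2 ≤ 1 / (L:ℝ) := by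
        by_contra hc
        push_neg at hc
        exact h (Finset.mem_filter.mpr ⟨Finset.mem_univ i, hc⟩)
      have h2 : |v i| ^ 2 ≤ ((L:ℝ) ^ (-(1:ℝ)/2)) ^ 2 := by
        rw [sq_abs]
        rw [← Real.rpow_natCast ((L:ℝ) ^ (-(1:ℝ)/2)) 2, ← Real.rpow_mul hLpos.le]
        norm_num
        rwa [Real.rpow_neg_one, ← one_div]
      calc |v i| = Real.sqrt (v i ^ 2) := (Real.sqrt_sq_eq_abs _).symm
        _ ≤ Real.sqrt (((L:ℝ) ^ (-(1:ℝ)/2)) ^ 2) := by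
            apply Real.sqrt_le_sqrt; rwa [sq_abs] at h2
        _ = (L:ℝ) ^ (-(1:ℝ)/2) := Real.sqrt_sq (by positivity)
  -- the scaled vector
  set c : ℝ := (L:ℝ) ^ ((1:ℝ)/2) with hc
  have hcpos : 0 < c := Real.rpow_pos_of_pos hLpos _
  have hcinv : c⁻¹ = (L:ℝ) ^ (-(1:ℝ)/2) := by
    rw [hc, ← Real.rpow_neg hLpos.le]
    norm_num
  set w : Fin N → ℝ := c • vm with hw
  have hwbd : ∀ i, |w i| ≤ 1 := by
    intro i
    simp only [hw, Pi.smul_apply, smul_eq_mul, abs_mul, abs_of_pos hcpos]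
    calc c * |vm i| ≤ c * (L:ℝ) ^ (-(1:ℝ)/2) :=
          mul_le_mul_of_nonneg_left (hvm_small i) hcpos.le
      _ = 1 := by
          rw [hc, ← Real.rpow_add hLpos]
          norm_num
  -- BddAbove of the range
  have hbdd : BddAbove (Set.range fun w : {w : Fin N → ℝ // ∀ i, |w i| ≤ 1} =>
      Real.sqrt (∑ i, (∑ j, X i j * w.1 j) ^ 2)) := by
    refine ⟨‖T‖ * Real.sqrt N, ?_⟩
    rintro x ⟨u, rfl⟩
    dsimp only
    rw [stmt13_key]
    show ‖T (e u.1)‖ ≤ _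
    calc ‖T (e u.1)‖ ≤ ‖T‖ * ‖e u.1‖ := T.le_opNorm _
      _ ≤ ‖T‖ * Real.sqrt N := by
          apply mul_le_mul_of_nonneg_left _ (norm_nonneg _)
          rw [stmt13_norm_eq]
          apply Real.sqrt_le_sqrt
          calc ∑ i, u.1 i ^ 2 ≤ ∑ _i : Fin N, (1:ℝ) := by
                apply Finset.sum_le_sum
                intro i _
                have := u.2 i
                nlinarith [abs_nonneg (u.1 i), sq_abs (u.1 i)]
            _ = N := by simp
  -- the vm bound
  have hXvm : ‖T (e vm)‖ ≤ (L:ℝ) ^ (-(1:ℝ)/2) *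
      (⨆ w : {w : Fin N → ℝ // ∀ i, |w i| ≤ 1},
        Real.sqrt (∑ i, (∑ j, X i j * w.1 j) ^ 2)) := by
    have hfw : Real.sqrt (∑ i, (∑ j, X i j * w j) ^ 2) ≤
        ⨆ w : {w : Fin N → ℝ // ∀ i, |w i| ≤ 1},
          Real.sqrt (∑ i, (∑ j, X i j * w.1 j) ^ 2) :=
      le_ciSup hbdd ⟨w, hwbd⟩
    have hwe : ‖T (e w)‖ = c * ‖T (e vm)‖ := by
      rw [hw, map_smul, map_smul, norm_smul, Real.norm_eq_abs, abs_of_pos hcpos]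
    rw [stmt13_key X w, hwe] at hfw
    calc ‖T (e vm)‖ = c⁻¹ * (c * ‖T (e vm)‖) := by
          field_simp
      _ ≤ c⁻¹ * _ := mul_le_mul_of_nonneg_left hfw (by positivity)
      _ = _ := by rw [hcinv]
  -- conclude
  rw [stmt13_key X v, hsplit, map_add, map_add]
  calc ‖T (e vp) + T (e vm)‖ ≤ ‖T (e vm)‖ + ‖T (e vp)‖ := by
        rw [add_comm (T (e vp))]; exact norm_add_le _ _
    _ ≤ _ := add_le_add hXvm hXvp
end
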